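/- Let z₀ ∈ ℂ⁺, r₀ > 0, and let q be a continuous function on the ray {s·z₀ : s ∈ (r₀,∞)} with values in ℂ∖{0}. Let f : (0,∞) → (0,∞) be measurable and let B ⊆ (r₀,∞) be a set of positive Lebesgue measure. Assume that for every z ∈ {s·z₀ : s ∈ B} the limit lim_{r→∞} q(rz)/f(r) exists and is non-zero. Then there exist α ∈ ℝ and ω ∈ ℂ∖{0} such that f is regularly varying at ∞ with index α and, for every z on the ray {s·z₀ : s ∈ (0,∞)}, lim_{r→∞} q(rz)/f(r) = i·ω·(z/i)^α. -/

import Mathlib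

open MeasureTheory Filter Set Topology Real

noncomputable section

/-- `f : (0,∞) → (0,∞)` is regularly varying at `∞` with index `α`:
for every `λ > 0`, `f(λr)/f(r) → λ^α` as `r → ∞`. -/
def RegVaryAtTop (f : ℝ → ℝ) (α : ℝ) : Prop :=
  ∀ l : ℝ, 0 < l → Tendsto (fun r => f (l * r) / f r) atTop (𝓝 (l ^ α))

open Pointwise

/-- A measurable additive function `ℝ → ℝ` is linear. -/
lemma cauchy_additive_measurable (g : ℝ → ℝ) (hg : Measurable g)
    (hadd : ∀ x y, g (x + y) = g x + g y) : ∀ x, g x = g 1 * x := by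
  set F : ℝ →+ ℝ := AddMonoidHom.mk' g hadd with hF
  have hFg : ∀ x, F x = g x := fun x => rfl
  have hnat : ∀ (m : ℕ) (x : ℝ), g (m * x) = m * g x := by
    intro m x
    have := map_nsmul F m x
    simpa [hFg, nsmul_eq_mul] using this
  -- a set of positive measure where g is bounded
  obtain ⟨n, hn⟩ : ∃ n : ℕ, 0 < volume {x : ℝ | x ∈ Icc (0:ℝ) 1 ∧ |g x| ≤ n} := by
    by_contra h
    push_neg at h
    simp only [le_zero_iff] at h
    have hcover : (Icc (0:ℝ) 1) ⊆ ⋃ n : ℕ, {x : ℝ | x ∈ Icc (0:ℝ) 1 ∧ |g x| ≤ n} := by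
      intro x hx
      obtain ⟨n, hn⟩ := exists_nat_ge (|g x|)
      exact mem_iUnion.2 ⟨n, hx, hn⟩
    have : volume (Icc (0:ℝ) 1) = 0 :=
      measure_mono_null hcover (measure_iUnion_null h)
    simp [Real.volume_Icc] at this
  set A : Set ℝ := {x : ℝ | x ∈ Icc (0:ℝ) 1 ∧ |g x| ≤ n} with hA
  have hAmeas : MeasurableSet A := by
    apply MeasurableSet.inter measurableSet_Icc
    exact measurableSet_le (hg.abs) measurable_const
  have hsub : A - A ∈ 𝓝 (0:ℝ) :=
    Measure.sub_mem_nhds_zero_of_addHaar_pos volume A hAmeas hn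
  obtain ⟨δ, hδ0, hδ⟩ : ∃ δ > 0, ∀ x : ℝ, |x| < δ → x ∈ A - A := by
    obtain ⟨δ, hδ0, hδ⟩ := Metric.mem_nhds_iff.1 hsub
    exact ⟨δ, hδ0, fun x hx => hδ (by simpa [Real.norm_eq_abs] using hx)⟩
  have hbound : ∀ x : ℝ, |x| < δ → |g x| ≤ 2 * n := by
    intro x hx
    obtain ⟨a, ha, b, hb, hab⟩ := Set.mem_sub.1 (hδ x hx)
    have hgx : g x = g a - g b := by
      have := hadd (a - b) b
      simp only [sub_add_cancel] at this
      rw [← hab]; linarith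
    rw [hgx]
    calc |g a - g b| ≤ |g a| + |g b| := abs_sub _ _
      _ ≤ 2 * n := by have := ha.2; have := hb.2; push_cast; linarith
  have hcont0 : Tendsto g (𝓝 0) (𝓝 0) := by
    rw [Metric.tendsto_nhds_nhds]
    intro ε hε
    obtain ⟨m, hm⟩ := exists_nat_gt ((2 * n) / ε)
    have hm0 : 0 < (m:ℝ) := lt_of_le_of_lt (div_nonneg (by positivity) hε.le) hm
    refine ⟨δ / m, by positivity, fun {x} hx => ?_⟩
    rw [Real.dist_eq, sub_zero] at hx ⊢
    have h1 : |(m:ℝ) * x| < δ := by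
      rw [abs_mul, abs_of_pos hm0]
      calc (m:ℝ) * |x| < m * (δ / m) := by
            apply mul_lt_mul_of_pos_left hx hm0
        _ = δ := by field_simp
    have h2 : |g ((m:ℝ) * x)| ≤ 2 * n := hbound _ h1
    rw [hnat m x, abs_mul, abs_of_pos hm0] at h2
    have : |g x| ≤ (2 * n) / m := by
      rw [le_div_iff₀ hm0]; linarith
    calc |g x| ≤ (2*n)/m := this
      _ < ε := by
          rw [div_lt_iff₀ hm0]
          have h3 := mul_lt_mul_of_pos_right hm hε
          rw [div_mul_cancel₀ _ hε.ne'] at h3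
          linarith
  have hcont : Continuous g := by
    rw [continuous_iff_continuousAt]
    intro x
    have heq : ∀ y : ℝ, g y = g (y - x) + g x := by
      intro y
      have := hadd (y - x) x
      simp only [sub_add_cancel] at this
      linarith
    unfold ContinuousAt
    have h1 : Tendsto (fun y : ℝ => g (y - x) + g x) (𝓝 x) (𝓝 (g x)) := by
      have h2 : Tendsto (fun y : ℝ => y - x) (𝓝 x) (𝓝 0) := by
        have := (continuous_id.sub (continuous_const (y := x))).tendsto x
        simpa [Pi.sub_def] using this
      have := (hcont0.comp h2).add_const (g x)
      simpa using this
    exact h1.congr (fun y => (heq y).symm)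
  have hrat : ∀ q : ℚ, g q = g 1 * q := by
    intro q
    have := map_rat_smul F q (1:ℝ)
    simp only [Rat.smul_def, mul_one] at this
    rw [hFg, hFg] at this
    rw [this, mul_comm]
  have : g = fun x => g 1 * x := by
    apply Continuous.ext_on Rat.denseRange_cast hcont (by continuity)
    rintro _ ⟨q, rfl⟩
    exact hrat q
  exact fun x => congrFun this x

/-- Splitting a complex power of a positive real multiple. -/
lemma mul_cpow_ofReal_pos {s : ℝ} (hs : 0 < s) {w : ℂ} (hw : w ≠ 0) (a : ℝ) :
    ((s : ℂ) * w) ^ (a : ℂ) = ((s ^ a : ℝ) : ℂ) * w ^ (a : ℂ) := by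
  have hs' : (s:ℂ) ≠ 0 := by exact_mod_cast ne_of_gt hs
  rw [Complex.cpow_def_of_ne_zero (mul_ne_zero hs' hw),
    Complex.cpow_def_of_ne_zero hw, Complex.log_ofReal_mul hs hw,
    Real.rpow_def_of_pos hs, Complex.ofReal_exp, ← Complex.exp_add]
  congr 1
  push_cast
  ring

theorem stmt9 (z₀ : ℂ) (hz₀ : 0 < z₀.im) (r₀ : ℝ) (hr₀ : 0 < r₀)
    (q : ℂ → ℂ)
    (hqcont : ContinuousOn q {w : ℂ | ∃ s : ℝ, s ∈ Ioi r₀ ∧ w = (s : ℂ) * z₀})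
    (hqne : ∀ s ∈ Ioi r₀, q ((s : ℂ) * z₀) ≠ 0)
    (f : ℝ → ℝ) (hfmeas : Measurable f) (hfpos : ∀ r > (0:ℝ), 0 < f r)
    (B : Set ℝ) (hBsub : B ⊆ Ioi r₀) (hBmeas : MeasurableSet B)
    (hBpos : 0 < volume B)
    (hlim : ∀ s ∈ B, ∃ L : ℂ, L ≠ 0 ∧
      Tendsto (fun r : ℝ => q ((r : ℂ) * ((s : ℂ) * z₀)) / (f r : ℂ)) atTop (𝓝 L)) :
    ∃ (α : ℝ) (ω : ℂ), ω ≠ 0 ∧ RegVaryAtTop f α ∧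
      ∀ s : ℝ, 0 < s →
        Tendsto (fun r : ℝ => q ((r : ℂ) * ((s : ℂ) * z₀)) / (f r : ℂ)) atTop
          (𝓝 (Complex.I * ω * (((s : ℂ) * z₀) / Complex.I) ^ (α : ℂ))) := by
  -- the restriction of q to the ray
  set Q : ℝ → ℂ := fun u => q ((u : ℂ) * z₀) with hQ
  have hfun : ∀ s : ℝ, (fun r : ℝ => q ((r : ℂ) * ((s : ℂ) * z₀)) / (f r : ℂ))
      = fun r : ℝ => Q (r * s) / (f r : ℂ) := by
    intro s; funext r
    have : ((r * s : ℝ) : ℂ) * z₀ = (r : ℂ) * ((s : ℂ) * z₀) := by push_cast; ring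
    simp only [hQ, this]
  have hQne : ∀ u : ℝ, r₀ < u → Q u ≠ 0 := fun u hu => hqne u hu
  have hfne : ∀ r : ℝ, 0 < r → (f r : ℂ) ≠ 0 := fun r hr => by
    exact_mod_cast (hfpos r hr).ne'
  -- the limits on B
  have hlim' : ∀ s ∈ B, ∃ L : ℂ, L ≠ 0 ∧
      Tendsto (fun r : ℝ => Q (r * s) / (f r : ℂ)) atTop (𝓝 L) := by
    intro s hs
    obtain ⟨L, hL0, hL⟩ := hlim s hs
    exact ⟨L, hL0, by rw [← hfun s]; exact hL⟩
  choose! L hLne hL using hlim'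
  -- composing along r ↦ r * t
  have key : ∀ s ∈ B, ∀ t : ℝ, 0 < t →
      Tendsto (fun r : ℝ => Q (r * t * s) / (f (r * t) : ℂ)) atTop (𝓝 (L s)) := by
    intro s hs t ht
    exact (hL s hs).comp (tendsto_id.atTop_mul_const ht)
  -- ratios of f along B quotients, complex version
  have hratio : ∀ s ∈ B, ∀ t ∈ B,
      Tendsto (fun r : ℝ => ((f (s * r) / f (t * r) : ℝ) : ℂ)) atTop (𝓝 (L s / L t)) := by
    intro s hs t ht
    have hs0 : 0 < s := lt_trans hr₀ (hBsub hs)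
    have ht0 : 0 < t := lt_trans hr₀ (hBsub ht)
    have h1 := (key s hs t ht0).div (key t ht s hs0) (hLne t ht)
    apply h1.congr'
    filter_upwards [eventually_gt_atTop (max (r₀ / (s * t)) 0)] with r hr
    have hr0 : 0 < r := lt_of_le_of_lt (le_max_right _ _) hr
    have hrst : r₀ < r * s * t := by
      have h2 : r₀ / (s * t) < r := lt_of_le_of_lt (le_max_left _ _) hr
      have := (div_lt_iff₀ (by positivity)).1 h2
      nlinarith
    have hA : Q (r * t * s) ≠ 0 := hQne _ (by nlinarith)
    have hb : (f (r * t) : ℂ) ≠ 0 := hfne _ (by positivity)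
    have hc : (f (r * s) : ℂ) ≠ 0 := hfne _ (by positivity)
    simp only [Pi.div_apply]
    rw [show r * s * t = r * t * s by ring]
    push_cast
    rw [show s * r = r * s by ring, show t * r = r * t by ring]
    field_simp
  -- real version with positive limit
  have hratioR : ∀ s ∈ B, ∀ t ∈ B, 0 < (L s / L t).re ∧
      Tendsto (fun r : ℝ => f (s * r) / f (t * r)) atTop (𝓝 ((L s / L t).re)) := by
    intro s hs t ht
    have hs0 : 0 < s := lt_trans hr₀ (hBsub hs)
    have ht0 : 0 < t := lt_trans hr₀ (hBsub ht)
    have hre : Tendsto (fun r : ℝ => f (s * r) / f (t * r)) atTop (𝓝 ((L s / L t).re)) := by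
      apply ((Complex.continuous_re.tendsto _).comp (hratio s hs t ht)).congr
      intro r
      simp [Function.comp, ← Complex.ofReal_div]
    have him : (L s / L t).im = 0 := by
      have h1 : Tendsto (fun r : ℝ => (((f (s * r) / f (t * r) : ℝ) : ℂ)).im) atTop
          (𝓝 ((L s / L t).im)) := (Complex.continuous_im.tendsto _).comp (hratio s hs t ht)
      have h2 : Tendsto (fun _ : ℝ => (0:ℝ)) atTop (𝓝 ((L s / L t).im)) := by
        apply h1.congr; intro r; simp
      exact tendsto_nhds_unique h2 tendsto_const_nhds
    have hnonneg : 0 ≤ (L s / L t).re := by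
      refine ge_of_tendsto hre ?_
      filter_upwards [eventually_gt_atTop (0:ℝ)] with r hr
      exact le_of_lt (div_pos (hfpos _ (by positivity)) (hfpos _ (by positivity)))
    have hne : (L s / L t).re ≠ 0 := by
      intro h0
      apply div_ne_zero (hLne s hs) (hLne t ht)
      exact Complex.ext h0 him
    exact ⟨lt_of_le_of_ne hnonneg (Ne.symm hne), hre⟩
  -- the tendsto predicate for ratios of f
  set T : ℝ → ℝ → Prop := fun l c => Tendsto (fun r : ℝ => f (l * r) / f r) atTop (𝓝 c) with hT
  -- 1 is good
  have hone : T 1 1 := by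
    apply Tendsto.congr' _ (tendsto_const_nhds (α := ℝ))
    filter_upwards [eventually_gt_atTop (0:ℝ)] with r hr
    rw [one_mul, div_self (hfpos r hr).ne']
  -- multiplication
  have hmul : ∀ l m cl cm : ℝ, 0 < l → 0 < m → T l cl → T m cm → T (l * m) (cl * cm) := by
    intro l m cl cm hl hm hTl hTm
    have h1 : Tendsto (fun r : ℝ => f (l * (m * r)) / f (m * r)) atTop (𝓝 cl) :=
      hTl.comp (tendsto_id.const_mul_atTop hm)
    have h2 := h1.mul hTm
    apply h2.congr'
    filter_upwards [eventually_gt_atTop (0:ℝ)] with r hr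
    have h3 : f (m * r) ≠ 0 := (hfpos _ (by positivity)).ne'
    rw [show l * m * r = l * (m * r) by ring]
    field_simp
  -- inverses
  have hinv : ∀ l cl : ℝ, 0 < l → 0 < cl → T l cl → T l⁻¹ cl⁻¹ := by
    intro l cl hl hcl hTl
    have h1 : Tendsto (fun r : ℝ => f (l * (l⁻¹ * r)) / f (l⁻¹ * r)) atTop (𝓝 cl) :=
      hTl.comp (tendsto_id.const_mul_atTop (by positivity))
    have h2 := h1.inv₀ hcl.ne'
    apply h2.congr
    intro r
    rw [show l * (l⁻¹ * r) = r by field_simp, inv_div]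
  -- powers
  have hpow : ∀ (n : ℕ) (l cl : ℝ), 0 < l → 0 < cl → T l cl → T (l ^ n) (cl ^ n) := by
    intro n
    induction n with
    | zero => intro l cl _ _ _; simpa using hone
    | succ n ih =>
      intro l cl hl hcl hTl
      rw [pow_succ, pow_succ]
      exact hmul _ _ _ _ (by positivity) hl (ih l cl hl hcl hTl) hTl
  -- quotients from B are good
  have hBB : ∀ s ∈ B, ∀ t ∈ B, ∃ c : ℝ, 0 < c ∧ T (s / t) c := by
    intro s hs t ht
    have hs0 : 0 < s := lt_trans hr₀ (hBsub hs)
    have ht0 : 0 < t := lt_trans hr₀ (hBsub ht)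
    refine ⟨(L s / L t).re, (hratioR s hs t ht).1, ?_⟩
    have h1 : Tendsto (fun r : ℝ => f (s * (r / t)) / f (t * (r / t))) atTop
        (𝓝 ((L s / L t).re)) := by
      refine ((hratioR s hs t ht).2).comp ?_
      exact Tendsto.atTop_div_const ht0 tendsto_id
    apply h1.congr
    intro r
    rw [show t * (r / t) = r by field_simp, show s * (r / t) = s / t * r by ring]
  -- Steinhaus: preimage of B under exp has positive measure
  have hApos : 0 < volume (Real.exp ⁻¹' B) := by
    rcases (show (0:ENNReal) ≤ volume (Real.exp ⁻¹' B) from zero_le).lt_or_eq with h | h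
    · exact h
    exfalso
    have hAmeas : MeasurableSet (Real.exp ⁻¹' B) := hBmeas.preimage Real.measurable_exp
    have himg : Real.exp '' (Real.exp ⁻¹' B) = B := by
      rw [Set.image_preimage_eq_inter_range, Real.range_exp]
      apply Set.inter_eq_left.2
      exact fun x hx => lt_trans hr₀ (hBsub hx)
    have hvol : volume (Real.exp '' (Real.exp ⁻¹' B)) = ∫⁻ x in Real.exp ⁻¹' B,
        ENNReal.ofReal |Real.exp x| * 1 := by
      rw [← setLIntegral_one]
      have := MeasureTheory.lintegral_image_eq_lintegral_abs_det_fderiv_mul (volume) hAmeas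
        (f' := fun x => (1 : ℝ →L[ℝ] ℝ).smulRight (Real.exp x))
        (fun x _ => ((Real.hasDerivAt_exp x).hasDerivWithinAt).hasFDerivWithinAt)
        Real.exp_injective.injOn (fun _ => (1:ENNReal))
      simpa [ContinuousLinearMap.det_toSpanSingleton] using this
    rw [himg] at hvol
    rw [hvol] at hBpos
    rw [setLIntegral_measure_zero _ _ h.symm] at hBpos
    exact lt_irrefl _ hBpos
  obtain ⟨δ, hδ0, hδ⟩ : ∃ δ > 0, ∀ x : ℝ, |x| < δ →
      x ∈ Real.exp ⁻¹' B - Real.exp ⁻¹' B := by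
    have hsub := Measure.sub_mem_nhds_zero_of_addHaar_pos volume (Real.exp ⁻¹' B)
      (hBmeas.preimage Real.measurable_exp) hApos
    obtain ⟨δ, hδ0, hδ⟩ := Metric.mem_nhds_iff.1 hsub
    exact ⟨δ, hδ0, fun x hx => hδ (by simpa [Real.norm_eq_abs] using hx)⟩
  -- every positive real is good
  have hGall : ∀ l : ℝ, 0 < l → ∃ c : ℝ, 0 < c ∧ T l c := by
    intro l hl
    set x := Real.log l with hx
    obtain ⟨n, hn⟩ := exists_nat_gt (|x| / δ)
    have hn0 : 0 < (n:ℝ) := lt_of_le_of_lt (div_nonneg (abs_nonneg _) hδ0.le) hn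
    have hxn : |x / n| < δ := by
      rw [abs_div, abs_of_pos hn0, div_lt_iff₀ hn0]
      have := (div_lt_iff₀ hδ0).1 hn
      linarith
    obtain ⟨a, ha, b, hb, hab⟩ := Set.mem_sub.1 (hδ _ hxn)
    have hexp : Real.exp (x / n) = Real.exp a / Real.exp b := by
      rw [← hab, Real.exp_sub]
    obtain ⟨c, hc0, hTc⟩ := hBB _ ha _ hb
    rw [← hexp] at hTc
    refine ⟨c ^ n, by positivity, ?_⟩
    have h2 : T (Real.exp (x / n) ^ n) (c ^ n) :=
      hpow n _ c (Real.exp_pos _) hc0 hTc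
    have h3 : Real.exp (x / n) ^ n = l := by
      rw [← Real.exp_nat_mul, mul_div_cancel₀ _ hn0.ne', hx, Real.exp_log hl]
    rwa [h3] at h2
  -- choose the limit function φ
  have hGall' : ∀ l : ℝ, ∃ c : ℝ, 0 < l → (0 < c ∧ T l c) := by
    intro l
    rcases le_or_gt l 0 with h | h
    · exact ⟨1, fun hl => absurd hl (not_lt.2 h)⟩
    · obtain ⟨c, hc⟩ := hGall l h
      exact ⟨c, fun _ => hc⟩
  choose φ hφ using hGall'
  -- the function g = log ∘ φ ∘ exp is additive and measurable
  set g : ℝ → ℝ := fun x => Real.log (φ (Real.exp x)) with hg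
  have hφpos : ∀ l : ℝ, 0 < l → 0 < φ l := fun l hl => (hφ l hl).1
  have hφT : ∀ l : ℝ, 0 < l → T l (φ l) := fun l hl => (hφ l hl).2
  have hgmeas : Measurable g := by
    have hmeas : ∀ n : ℕ, Measurable (fun x : ℝ =>
        Real.log (f (Real.exp x * ((n:ℝ) + 1)) / f ((n:ℝ) + 1))) := by
      intro n
      exact Real.measurable_log.comp
        ((hfmeas.comp (Real.measurable_exp.mul_const _)).div_const _)
    apply measurable_of_tendsto_metrizable hmeas
    rw [tendsto_pi_nhds]
    intro x
    have hex : 0 < Real.exp x := Real.exp_pos x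
    have h1 : Tendsto (fun n : ℕ => ((n:ℝ) + 1)) atTop atTop :=
      tendsto_atTop_add_const_right _ _ tendsto_natCast_atTop_atTop
    have h2 : Tendsto (fun n : ℕ => f (Real.exp x * ((n:ℝ) + 1)) / f ((n:ℝ) + 1)) atTop
        (𝓝 (φ (Real.exp x))) := (hφT _ hex).comp h1
    exact ((Real.continuousAt_log (hφpos _ hex).ne').tendsto).comp h2
  have hgadd : ∀ x y : ℝ, g (x + y) = g x + g y := by
    intro x y
    have hx := Real.exp_pos x
    have hy := Real.exp_pos y
    have h1 : T (Real.exp x * Real.exp y) (φ (Real.exp x) * φ (Real.exp y)) :=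
      hmul _ _ _ _ hx hy (hφT _ hx) (hφT _ hy)
    have h2 : T (Real.exp x * Real.exp y) (φ (Real.exp x * Real.exp y)) :=
      hφT _ (by positivity)
    have h3 : φ (Real.exp x * Real.exp y) = φ (Real.exp x) * φ (Real.exp y) :=
      tendsto_nhds_unique h2 h1
    simp only [hg, Real.exp_add, h3]
    rw [Real.log_mul (hφpos _ hx).ne' (hφpos _ hy).ne']
  set α : ℝ := g 1 with hα
  have hcauchy := cauchy_additive_measurable g hgmeas hgadd
  have hφrpow : ∀ l : ℝ, 0 < l → φ l = l ^ α := by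
    intro l hl
    have h1 : g (Real.log l) = α * Real.log l := hcauchy (Real.log l)
    have h2 : Real.log (φ l) = α * Real.log l := by
      rw [← h1]; simp only [hg, Real.exp_log hl]
    rw [← Real.exp_log (hφpos l hl), h2, Real.rpow_def_of_pos hl, mul_comm]
  have hRV : RegVaryAtTop f α := by
    intro l hl
    have := hφT l hl
    rwa [hφrpow l hl] at this
  -- pick a base point in B
  obtain ⟨t₀, ht₀⟩ := nonempty_of_measure_ne_zero hBpos.ne'
  have ht₀r : r₀ < t₀ := hBsub ht₀
  have ht₀0 : 0 < t₀ := lt_trans hr₀ ht₀r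
  have hz₀ne : z₀ ≠ 0 := fun h => by simp [h] at hz₀
  have hwne : z₀ / Complex.I ≠ 0 := div_ne_zero hz₀ne Complex.I_ne_zero
  have hPne : (z₀ / Complex.I) ^ (α:ℂ) ≠ 0 := by
    rw [Ne, Complex.cpow_eq_zero_iff]
    exact fun h => hwne h.1
  set ω : ℂ := (L t₀ / ((t₀ ^ α : ℝ) : ℂ)) / (Complex.I * (z₀ / Complex.I) ^ (α:ℂ)) with hω
  have ht₀α : ((t₀ ^ α : ℝ) : ℂ) ≠ 0 := by
    exact_mod_cast (Real.rpow_pos_of_pos ht₀0 α).ne'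
  have hωne : ω ≠ 0 :=
    div_ne_zero (div_ne_zero (hLne t₀ ht₀) ht₀α) (mul_ne_zero Complex.I_ne_zero hPne)
  refine ⟨α, ω, hωne, hRV, ?_⟩
  intro s hs
  rw [hfun s]
  have hval : Complex.I * ω * (((s:ℂ) * z₀) / Complex.I) ^ (α:ℂ)
      = L t₀ * (((s / t₀) ^ α : ℝ) : ℂ) := by
    rw [mul_div_assoc, mul_cpow_ofReal_pos hs hwne α, Real.div_rpow hs.le ht₀0.le,
      Complex.ofReal_div, hω]
    field_simp
  rw [hval]
  have h1 : Tendsto (fun r : ℝ => Q (r * (s / t₀) * t₀) / (f (r * (s / t₀)) : ℂ)) atTop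
      (𝓝 (L t₀)) := (hL t₀ ht₀).comp (tendsto_id.atTop_mul_const (by positivity))
  have h2 : Tendsto (fun r : ℝ => ((f (s / t₀ * r) / f r : ℝ) : ℂ)) atTop
      (𝓝 ((((s / t₀) ^ α : ℝ)) : ℂ)) :=
    (Complex.continuous_ofReal.tendsto _).comp (hRV (s / t₀) (by positivity))
  have h3 := h1.mul h2
  apply h3.congr'
  filter_upwards [eventually_gt_atTop (0:ℝ)] with r hr
  have hfs : (f (r * (s / t₀)) : ℂ) ≠ 0 := hfne _ (by positivity)
  have hfr : (f r : ℂ) ≠ 0 := hfne _ hr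
  have harg : r * (s / t₀) * t₀ = r * s := by field_simp
  have hkey : ∀ a b c : ℂ, b ≠ 0 → a / b * (b / c) = a / c := by
    intro a b c hb; field_simp
  show Q (r * (s / t₀) * t₀) / (f (r * (s / t₀)) : ℂ) * ((f (s / t₀ * r) / f r : ℝ) : ℂ)
      = Q (r * s) / (f r : ℂ)
  rw [harg, Complex.ofReal_div, show s / t₀ * r = r * (s / t₀) by ring]
  exact hkey _ _ _ hfs
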